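/- Suppose c ∈ L¹[0, 2π] satisfies the four orthogonality conditions ∫_{−π/2}^{π/2} c(φ)·cos φ dφ = ∫_{−π/2}^{π/2} c(φ+π)·cos φ dφ = ∫_{−π/2}^{π/2} c(φ)·sin φ dφ = ∫_{−π/2}^{π/2} c(φ+π)·sin φ dφ = 0 (with c extended 2π-periodically), and let f(x) = ∫₀^{2π} c(φ)·σ(x·cos φ + sin φ) dφ. Then for almost every x ∈ ℝ the second derivative f″(x) exists and equals ( c(−arctan x) + c(−arctan x + π) ) / (1 + x²)^{3/2}. -/

import Mathlib

open MeasureTheory Real Set Filter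
open scoped Topology

lemma per_intInt {f : ℝ → ℝ} {T : ℝ} (hT : 0 < T) (hper : Function.Periodic f T)
    (h : IntervalIntegrable f volume 0 T) (a b : ℝ) : IntervalIntegrable f volume a b := by
  have h1 : ∀ n : ℤ, IntervalIntegrable f volume (-(n * T)) (T - n * T) := by
    intro n
    have := h.comp_add_right (n * T)
    have heq : (fun x => f (x + n * T)) = f := by
      funext x
      have := (hper.zsmul n) x
      simpa [zsmul_eq_mul] using this
    rw [heq] at this
    simpa [zero_sub] using this
  have h2 : ∀ N : ℕ, IntervalIntegrable f volume (-(N * T)) (N * T) := by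
    intro N
    induction N with
    | zero => simp
    | succ N ih =>
      have left : IntervalIntegrable f volume (-(((N:ℝ)+1) * T)) (-((N:ℝ) * T)) := by
        have := h1 ((N:ℤ)+1)
        push_cast at this
        have e1 : T - ((N:ℝ)+1)*T = -((N:ℝ)*T) := by ring
        rwa [e1] at this
      have right : IntervalIntegrable f volume ((N:ℝ) * T) (((N:ℝ)+1) * T) := by
        have := h1 (-(N:ℤ))
        push_cast at this
        have e1 : -(-(N:ℝ)*T) = (N:ℝ)*T := by ring
        have e2 : T - -(N:ℝ)*T = ((N:ℝ)+1)*T := by ring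
        rwa [e1, e2] at this
      push_cast
      exact (left.trans ih).trans right
  obtain ⟨N, hN⟩ := exists_nat_gt ((max |a| |b|) / T)
  have hNT : max |a| |b| < N * T := (div_lt_iff₀ hT).mp hN
  refine (h2 N).mono_set ?_
  have h0 : (0:ℝ) ≤ (N:ℝ) * T := by positivity
  rw [uIcc_of_le (by linarith : -((N:ℝ) * T) ≤ (N:ℝ)*T)]
  have ha : |a| ≤ (N:ℝ)*T := le_of_lt (lt_of_le_of_lt (le_max_left _ _) hNT)
  have hb : |b| ≤ (N:ℝ)*T := le_of_lt (lt_of_le_of_lt (le_max_right _ _) hNT)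
  rw [abs_le] at ha hb
  exact uIcc_subset_Icc ⟨ha.1, ha.2⟩ ⟨hb.1, hb.2⟩

lemma ae_hasDerivAt_primitive {k : ℝ → ℝ} (hk : ∀ a b, IntervalIntegrable k volume a b) :
    ∀ᵐ u : ℝ, HasDerivAt (fun v => ∫ t in (0:ℝ)..v, k t) (k u) u := by
  have hloc : LocallyIntegrable k volume := by
    rw [MeasureTheory.locallyIntegrable_iff]
    intro K hK
    obtain ⟨r, hr⟩ := hK.isBounded.subset_closedBall 0
    have hr0 : Metric.closedBall (0:ℝ) r ⊆ Metric.closedBall 0 (max r 0) :=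
      Metric.closedBall_subset_closedBall (le_max_left _ _)
    have : IntegrableOn k (Icc (-(max r 0)) (max r 0)) volume :=
      (intervalIntegrable_iff_integrableOn_Icc_of_le (by
        have := le_max_right r 0; linarith)).mp (hk _ _)
    refine this.mono_set ?_
    refine (hr.trans hr0).trans ?_
    rw [Real.closedBall_eq_Icc, zero_sub, zero_add]
  filter_upwards [(IsUnifLocDoublingMeasure.vitaliFamily (volume : Measure ℝ) 1).ae_tendsto_average
    hloc] with u hu
  rw [hasDerivAt_iff_tendsto_slope, ← nhdsLT_sup_nhdsGT, tendsto_sup]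
  have key : ∀ y : ℝ, y ≠ u →
      slope (fun v => ∫ t in (0:ℝ)..v, k t) u y
        = ⨍ t in Icc (min u y) (max u y), k t := by
    intro y hy
    rcases lt_or_gt_of_ne hy with hlt | hgt
    · rw [min_eq_right hlt.le, max_eq_left hlt.le, setAverage_eq, Real.volume_real_Icc_of_le hlt.le, integral_Icc_eq_integral_Ioc,
        ← intervalIntegral.integral_of_le hlt.le,
        ← intervalIntegral.integral_interval_sub_left (hk 0 u) (hk 0 y)]
      rw [slope_def_field, smul_eq_mul]
      have hA : u - y ≠ 0 := by linarith
      have hB : y - u ≠ 0 := by linarith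
      field_simp
      ring
    · rw [min_eq_left hgt.le, max_eq_right hgt.le, setAverage_eq, Real.volume_real_Icc_of_le hgt.le, integral_Icc_eq_integral_Ioc,
        ← intervalIntegral.integral_of_le hgt.le,
        ← intervalIntegral.integral_interval_sub_left (hk 0 y) (hk 0 u)]
      rw [slope_def_field, smul_eq_mul]
      have hA : u - y ≠ 0 := by linarith
      have hB : y - u ≠ 0 := by linarith
      field_simp
  constructor
  · have := hu.comp (Real.tendsto_Icc_vitaliFamily_left u)
    refine this.congr' ?_
    filter_upwards [self_mem_nhdsWithin] with y hy
    have : (y:ℝ) < u := hy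
    rw [key y this.ne, min_eq_right this.le, max_eq_left this.le]
    rfl
  · have := hu.comp (Real.tendsto_Icc_vitaliFamily_right u)
    refine this.congr' ?_
    filter_upwards [self_mem_nhdsWithin] with y hy
    have : u < y := hy
    rw [key y this.ne', min_eq_left this.le, max_eq_right this.le]
    rfl

lemma ae_arctan_not_mem {N : Set ℝ} (hN : volume N = 0) : ∀ᵐ x : ℝ, Real.arctan x ∉ N := by
  have hMnull : volume (toMeasurable volume N) = 0 := by
    rw [measure_toMeasurable]; exact hN
  have hsub : {x : ℝ | Real.arctan x ∈ N}
      ⊆ Real.tan '' (toMeasurable volume N ∩ Ioo (-(π/2)) (π/2)) := by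
    intro x hx
    exact ⟨Real.arctan x, ⟨subset_toMeasurable _ _ hx,
      Real.neg_pi_div_two_lt_arctan x, Real.arctan_lt_pi_div_two x⟩, Real.tan_arctan x⟩
  have himg : volume (Real.tan '' (toMeasurable volume N ∩ Ioo (-(π/2)) (π/2))) = 0 := by
    apply MeasureTheory.addHaar_image_eq_zero_of_differentiableOn_of_addHaar_eq_zero
    · intro z hz
      have hc : Real.cos z ≠ 0 := (Real.cos_pos_of_mem_Ioo hz.2).ne'
      exact (Real.differentiableAt_tan.mpr hc).differentiableWithinAt
    · exact measure_mono_null inter_subset_left hMnull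
  rw [ae_iff]
  have : {x : ℝ | ¬ Real.arctan x ∉ N} = {x : ℝ | Real.arctan x ∈ N} := by simp
  rw [this]
  exact measure_mono_null hsub himg

/-- If `c ∈ L¹[0,2π]` (extended `2π`-periodically) satisfies the four
orthogonality conditions and `f(x) = ∫₀^{2π} c(φ) σ(x cos φ + sin φ) dφ`, then for almost
every `x ∈ ℝ` the second derivative `f''(x)` exists and equals
`(c(-arctan x) + c(-arctan x + π)) / (1 + x²)^{3/2}`. -/
theorem statement16 (c : ℝ → ℝ)
    (hper : Function.Periodic c (2 * Real.pi))
    (hc : IntervalIntegrable c volume 0 (2 * Real.pi))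
    (h1 : ∫ φ in (-(Real.pi/2))..(Real.pi/2), c φ * Real.cos φ = 0)
    (h2 : ∫ φ in (-(Real.pi/2))..(Real.pi/2), c (φ + Real.pi) * Real.cos φ = 0)
    (h3 : ∫ φ in (-(Real.pi/2))..(Real.pi/2), c φ * Real.sin φ = 0)
    (h4 : ∫ φ in (-(Real.pi/2))..(Real.pi/2), c (φ + Real.pi) * Real.sin φ = 0)
    (f : ℝ → ℝ)
    (hf : ∀ x : ℝ, f x =
      ∫ φ in (0:ℝ)..(2 * Real.pi), c φ * max (x * Real.cos φ + Real.sin φ) 0) :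
    ∀ᵐ x : ℝ,
      HasDerivAt (deriv f)
        ((c (-Real.arctan x) + c (-Real.arctan x + Real.pi)) / (1 + x ^ 2) ^ ((3:ℝ)/2))
        x := by
  have hπ : (0:ℝ) < π := Real.pi_pos
  -- the function k = c * cos
  set k : ℝ → ℝ := fun φ => c φ * Real.cos φ with hk_def
  have hkper : Function.Periodic k (2*π) := by
    intro φ
    simp only [hk_def]
    rw [hper φ, Real.cos_add_two_pi]
  have hk0 : IntervalIntegrable k volume 0 (2*π) :=
    hc.mul_continuousOn Real.continuous_cos.continuousOn
  have hk : ∀ a b, IntervalIntegrable k volume a b :=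
    per_intInt (by positivity) hkper hk0
  set H : ℝ → ℝ := fun v => ∫ t in (0:ℝ)..v, k t with hH_def
  set Ind : ℝ → ℝ → ℝ :=
    fun x => Set.indicator {ψ : ℝ | 0 < x * Real.cos ψ + Real.sin ψ} k with hInd_def
  have hS : ∀ x : ℝ, MeasurableSet {ψ : ℝ | 0 < x * Real.cos ψ + Real.sin ψ} := by
    intro x
    exact (isOpen_lt continuous_const (by fun_prop)).measurableSet
  have hIndInt : ∀ x a b : ℝ, IntervalIntegrable (Ind x) volume a b := by
    intro x a b
    have := hk a b
    rw [intervalIntegrable_iff] at this ⊢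
    exact this.indicator (hS x)
  have hIndPer : ∀ x : ℝ, Function.Periodic (Ind x) (2*π) := by
    intro x φ
    simp only [hInd_def, Set.indicator_apply, mem_setOf_eq, Real.cos_add_two_pi,
      Real.sin_add_two_pi, hkper φ]
  -- key identity
  have hid : ∀ x φ : ℝ, x * Real.cos φ + Real.sin φ
      = Real.sin (φ + Real.arctan x) / Real.cos (Real.arctan x) := by
    intro x φ
    have hc0 : Real.cos (Real.arctan x) ≠ 0 := (Real.cos_arctan_pos x).ne'
    have hsc : Real.sin (Real.arctan x) = x * Real.cos (Real.arctan x) := by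
      rw [Real.sin_arctan, Real.cos_arctan]; ring
    rw [Real.sin_add, hsc]
    field_simp
    ring
  -- Step B : the candidate first derivative
  have hg : ∀ x : ℝ, (∫ φ in (0:ℝ)..(2*π), Ind x φ)
      = H (-(Real.arctan x) + π) - H (-(Real.arctan x)) := by
    intro x
    set θ := Real.arctan x with hθ
    have hcosθ : 0 < Real.cos θ := Real.cos_arctan_pos x
    have e0 : (∫ φ in (0:ℝ)..(2*π), Ind x φ) = ∫ φ in (-θ)..(-θ + 2*π), Ind x φ := by
      have := (hIndPer x).intervalIntegral_add_eq 0 (-θ)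
      simpa using this
    have esplit : (∫ φ in (-θ)..(-θ + 2*π), Ind x φ)
        = (∫ φ in (-θ)..(-θ + π), Ind x φ) + ∫ φ in (-θ + π)..(-θ + 2*π), Ind x φ := by
      rw [intervalIntegral.integral_add_adjacent_intervals (hIndInt x _ _) (hIndInt x _ _)]
    have e1 : (∫ φ in (-θ)..(-θ + π), Ind x φ) = ∫ φ in (-θ)..(-θ + π), k φ := by
      apply intervalIntegral.integral_congr_ae
      have hsing : ∀ᵐ φ : ℝ, φ ≠ -θ + π := by
        rw [ae_iff]
        have : {φ : ℝ | ¬ φ ≠ -θ + π} = {-θ + π} := by simp [Set.ext_iff]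
        rw [this]
        exact measure_singleton _
      filter_upwards [hsing] with φ hφ hmem
      rw [Set.uIoc_of_le (by linarith : -θ ≤ -θ + π)] at hmem
      have h1' : 0 < φ + θ := by have := hmem.1; linarith
      have h2' : φ + θ < π := by
        rcases lt_or_eq_of_le hmem.2 with h | h
        · linarith
        · exact absurd h hφ
      have hpos : 0 < x * Real.cos φ + Real.sin φ := by
        rw [hid x φ, ← hθ]
        exact div_pos (Real.sin_pos_of_pos_of_lt_pi h1' h2') hcosθ
      simp only [hInd_def, Set.indicator_apply, mem_setOf_eq, if_pos hpos]
    have e2 : (∫ φ in (-θ + π)..(-θ + 2*π), Ind x φ) = 0 := by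
      have heq : EqOn (Ind x) (fun _ => (0:ℝ)) (uIcc (-θ + π) (-θ + 2*π)) := by
        intro φ hφ
        rw [uIcc_of_le (by linarith)] at hφ
        have h1' : π ≤ φ + θ := by have := hφ.1; linarith
        have h2' : φ + θ ≤ 2*π := by have := hφ.2; linarith
        have hsin : Real.sin (φ + θ) ≤ 0 := by
          have hge : 0 ≤ Real.sin (φ + θ - π) :=
            Real.sin_nonneg_of_nonneg_of_le_pi (by linarith) (by linarith)
          rw [Real.sin_sub_pi] at hge
          linarith
        have hnpos : ¬ (0 < x * Real.cos φ + Real.sin φ) := by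
          rw [hid x φ, ← hθ]
          exact not_lt.mpr (div_nonpos_of_nonpos_of_nonneg hsin hcosθ.le)
        simp only [hInd_def, Set.indicator_apply, mem_setOf_eq, if_neg hnpos]
      rw [intervalIntegral.integral_congr heq]
      simp
    have e3 : (∫ φ in (-θ)..(-θ + π), k φ) = H (-θ + π) - H (-θ) := by
      rw [hH_def]
      rw [← intervalIntegral.integral_interval_sub_left (hk 0 (-θ + π)) (hk 0 (-θ))]
    rw [e0, esplit, e1, e2, e3]
    ring
  -- Step A : f is differentiable everywhere with derivative given by the indicator integral
  have hcΙ : IntegrableOn c (Set.uIoc 0 (2*π)) volume := intervalIntegrable_iff.mp hc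
  have hf' : ∀ x₀ : ℝ, HasDerivAt f (∫ φ in (0:ℝ)..(2*π), Ind x₀ φ) x₀ := by
    intro x₀
    have hZ : volume {φ : ℝ | x₀ * Real.cos φ + Real.sin φ = 0} = 0 := by
      apply Set.Countable.measure_zero
      refine Set.Countable.mono ?_ (Set.countable_range
        (fun n : ℤ => (n:ℝ) * π - Real.arctan x₀))
      intro φ hφ
      have hsin : Real.sin (φ + Real.arctan x₀) = 0 := by
        have := hid x₀ φ
        rw [hφ] at this
        have hc0 : Real.cos (Real.arctan x₀) ≠ 0 := (Real.cos_arctan_pos x₀).ne'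
        field_simp at this
        linarith [this]
      rw [Real.sin_eq_zero_iff] at hsin
      obtain ⟨n, hn⟩ := hsin
      refine ⟨n, ?_⟩
      show (n:ℝ) * π - Real.arctan x₀ = φ
      linarith
    have hae : ∀ᵐ φ : ℝ, x₀ * Real.cos φ + Real.sin φ ≠ 0 := by
      rw [ae_iff]
      simpa [not_not] using hZ
    have key := intervalIntegral.hasDerivAt_integral_of_dominated_loc_of_lip
      (F := fun x φ => c φ * max (x * Real.cos φ + Real.sin φ) 0)
      (F' := Ind x₀) (x₀ := x₀) (a := 0) (b := 2*π) (μ := volume)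
      (bound := fun φ => |c φ|) (s := Metric.ball x₀ 1) (Metric.ball_mem_nhds x₀ one_pos)
      ?_ ?_ ?_ ?_ ?_ ?_
    · have hfe : (fun x => ∫ φ in (0:ℝ)..(2*π), c φ * max (x * Real.cos φ + Real.sin φ) 0)
          = f := by
        funext x; exact (hf x).symm
      rw [hfe] at key
      exact key.2
    · filter_upwards with x
      exact hcΙ.aestronglyMeasurable.mul
        ((Continuous.aestronglyMeasurable (by fun_prop)))
    · exact hc.mul_continuousOn (Continuous.continuousOn (by fun_prop))
    · exact (hcΙ.aestronglyMeasurable.mul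
        Real.continuous_cos.aestronglyMeasurable).indicator (hS x₀)
    · filter_upwards with φ _
      apply LipschitzOnWith.of_dist_le_mul
      intro x _ y _
      rw [Real.dist_eq, Real.dist_eq, ← mul_sub, abs_mul, Real.coe_nnabs, abs_abs]
      have hmax : |max (x * Real.cos φ + Real.sin φ) 0 - max (y * Real.cos φ + Real.sin φ) 0|
          ≤ |x - y| := by
        refine le_trans (abs_max_sub_max_le_abs _ _ _) ?_
        have : x * Real.cos φ + Real.sin φ - (y * Real.cos φ + Real.sin φ)
            = (x - y) * Real.cos φ := by ring
        rw [this, abs_mul]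
        calc |x - y| * |Real.cos φ| ≤ |x - y| * 1 := by
              exact mul_le_mul_of_nonneg_left (Real.abs_cos_le_one φ) (abs_nonneg _)
          _ = |x - y| := mul_one _
      exact mul_le_mul_of_nonneg_left hmax (abs_nonneg _)
    · exact hc.abs
    · filter_upwards [hae] with φ hφ _
      rcases hφ.lt_or_gt with hneg | hpos
      · have hev : ∀ᶠ x in 𝓝 x₀, c φ * max (x * Real.cos φ + Real.sin φ) 0 = 0 := by
          have hcont : ContinuousAt (fun x : ℝ => x * Real.cos φ + Real.sin φ) x₀ := by
            fun_prop
          have hevlt : ∀ᶠ x in 𝓝 x₀, x * Real.cos φ + Real.sin φ < 0 :=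
            hcont.eventually_lt continuousAt_const hneg
          filter_upwards [hevlt] with x hx
          rw [max_eq_right hx.le, mul_zero]
        have hind : Ind x₀ φ = 0 := by
          apply Set.indicator_of_notMem
          simpa [mem_setOf_eq] using asymm hneg
        rw [hind]
        exact (hasDerivAt_const x₀ (0:ℝ)).congr_of_eventuallyEq hev
      · have base : HasDerivAt (fun x : ℝ => c φ * (x * Real.cos φ + Real.sin φ))
            (c φ * Real.cos φ) x₀ := by
          have h0 : HasDerivAt (fun x : ℝ => x * Real.cos φ + Real.sin φ) (Real.cos φ) x₀ := by
            simpa using ((hasDerivAt_id x₀).mul_const (Real.cos φ)).add_const (Real.sin φ)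
          simpa using h0.const_mul (c φ)
        have hcont : ContinuousAt (fun x : ℝ => x * Real.cos φ + Real.sin φ) x₀ := by
          fun_prop
        have hevgt : ∀ᶠ x in 𝓝 x₀, 0 < x * Real.cos φ + Real.sin φ :=
          continuousAt_const.eventually_lt hcont hpos
        have hev : (fun x => c φ * max (x * Real.cos φ + Real.sin φ) 0)
            =ᶠ[𝓝 x₀] (fun x => c φ * (x * Real.cos φ + Real.sin φ)) := by
          filter_upwards [hevgt] with x hx
          rw [max_eq_left hx.le]
        have hind : Ind x₀ φ = c φ * Real.cos φ := by
          apply Set.indicator_of_mem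
          exact hpos
        rw [hind]
        exact base.congr_of_eventuallyEq hev
  -- deriv f
  have hderiv : deriv f = fun x => H (-(Real.arctan x) + π) - H (-(Real.arctan x)) := by
    funext x
    rw [(hf' x).deriv, hg x]
  -- a.e. differentiability of H
  have hHae : ∀ᵐ u : ℝ, HasDerivAt H (k u) u := ae_hasDerivAt_primitive hk
  set A := {u : ℝ | HasDerivAt H (k u) u} with hA_def
  have hAc : volume Aᶜ = 0 := by
    have := ae_iff.mp hHae
    simpa [hA_def, Set.compl_def] using this
  have ae1 : ∀ᵐ x : ℝ, -(Real.arctan x) ∈ A := by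
    have hneg : volume (Neg.neg ⁻¹' Aᶜ) = 0 := by
      rw [Measure.measure_preimage_neg]
      exact hAc
    filter_upwards [ae_arctan_not_mem hneg] with x hx
    simpa [Set.mem_preimage] using hx
  have ae2 : ∀ᵐ x : ℝ, -(Real.arctan x) + π ∈ A := by
    have hpre : volume ((fun u : ℝ => -u + π) ⁻¹' Aᶜ) = 0 := by
      have heq : ((fun u : ℝ => -u + π) ⁻¹' Aᶜ) = Neg.neg ⁻¹' ((fun u : ℝ => u + π) ⁻¹' Aᶜ) := by
        rfl
      rw [heq]
      have h1 : volume ((fun u : ℝ => u + π) ⁻¹' Aᶜ) = 0 := by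
        rw [measure_preimage_add_right]
        exact hAc
      rw [Measure.measure_preimage_neg]
      exact h1
    filter_upwards [ae_arctan_not_mem hpre] with x hx
    simpa [Set.mem_preimage] using hx
  -- conclusion
  filter_upwards [ae1, ae2] with x hx1 hx2
  have d1 : HasDerivAt H (k (-(Real.arctan x))) (-(Real.arctan x)) := hx1
  have d2 : HasDerivAt H (k (-(Real.arctan x) + π)) (-(Real.arctan x) + π) := hx2
  have darct : HasDerivAt (fun y : ℝ => -(Real.arctan y)) (-(1/(1+x^2))) x :=
    (Real.hasDerivAt_arctan x).neg
  have darct2 : HasDerivAt (fun y : ℝ => -(Real.arctan y) + π) (-(1/(1+x^2))) x :=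
    darct.add_const π
  have comp2 : HasDerivAt (fun y : ℝ => H (-(Real.arctan y) + π))
      (k (-(Real.arctan x) + π) * (-(1/(1+x^2)))) x := by
    have := HasDerivAt.comp x d2 darct2
    simpa [Function.comp_def] using this
  have comp1 : HasDerivAt (fun y : ℝ => H (-(Real.arctan y)))
      (k (-(Real.arctan x)) * (-(1/(1+x^2)))) x := by
    have := HasDerivAt.comp x d1 darct
    simpa [Function.comp_def] using this
  have total := comp2.sub comp1
  rw [hderiv]
  refine total.congr_deriv ?_
  -- arithmetic
  have hcpi : Real.cos (-(Real.arctan x) + π) = -Real.cos (Real.arctan x) := by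
    rw [show -(Real.arctan x) + π = π - Real.arctan x from by ring, Real.cos_pi_sub]
  have hx2 : (0:ℝ) < 1 + x^2 := by positivity
  have hs : 0 < Real.sqrt (1+x^2) := Real.sqrt_pos.mpr hx2
  have hs2 : Real.sqrt (1+x^2)^2 = 1+x^2 := Real.sq_sqrt hx2.le
  have hrpow : (1+x^2) ^ ((3:ℝ)/2) = (1+x^2) * Real.sqrt (1+x^2) := by
    rw [show (3:ℝ)/2 = 1 + 1/2 by norm_num, Real.rpow_add hx2, Real.rpow_one,
      Real.sqrt_eq_rpow]
  simp only [hk_def, Real.cos_neg, hcpi, Real.cos_arctan, hrpow]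
  have hone : Real.sqrt (1 + x^2) ≠ 0 := hs.ne'
  field_simp
  ring_nf
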